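/- arXiv:1212.3895 — 2 statements merged into one kernel-verified Lean document; each statement's English description precedes it below -/
import Mathlib

section
/- For every s > 5 there exist positive reals a ≠ b with λ_s(a,b) > S(a,b); in fact, with t = (b-a)/(b+a), λ_s(a,b) - S(a,b) = A(a,b)·((s-5)/6·t² + O(t⁴)) as t → 0⁺, which is positive for sufficiently small t. -/
open Set

private lemma hDA_add (p t : ℝ) (h : -1 < t) :
    HasDerivAt (fun x : ℝ => (1+x) ^ p) (p * (1+t) ^ (p-1)) t := by
  have h1 : HasDerivAt (fun x : ℝ => 1 + x) 1 t := by
    simpa using (hasDerivAt_id t).const_add 1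
  have h2 := (Real.hasDerivAt_rpow_const (x := 1+t) (p := p)
    (Or.inl (by linarith))).comp t h1
  exact h2.congr_deriv (by simp)

private lemma hDA_sub (p t : ℝ) (h : t < 1) :
    HasDerivAt (fun x : ℝ => (1-x) ^ p) (-(p * (1-t) ^ (p-1))) t := by
  have h1 : HasDerivAt (fun x : ℝ => 1 - x) (-1) t := by
    simpa using (hasDerivAt_id t).const_sub 1
  have h2 := (Real.hasDerivAt_rpow_const (x := 1-t) (p := p)
    (Or.inl (by intro hc; nlinarith))).comp t h1
  exact h2.congr_deriv (by ring)

private lemma nonneg_of_deriv {F F' : ℝ → ℝ} {c : ℝ}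
    (hd : ∀ t ∈ Set.Icc (0:ℝ) c, HasDerivAt F (F' t) t)
    (h0 : F 0 = 0) (hF' : ∀ t ∈ Set.Icc (0:ℝ) c, 0 ≤ F' t)
    {t : ℝ} (ht : t ∈ Set.Icc (0:ℝ) c) : 0 ≤ F t := by
  have h0c : (0:ℝ) ∈ Set.Icc (0:ℝ) c := ⟨le_refl 0, le_trans ht.1 ht.2⟩
  have hmono : MonotoneOn F (Set.Icc 0 c) := by
    apply monotoneOn_of_deriv_nonneg (convex_Icc 0 c)
    · exact fun x hx => (hd x hx).continuousAt.continuousWithinAt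
    · intro x hx
      rw [interior_Icc] at hx
      exact ((hd x ⟨le_of_lt hx.1, le_of_lt hx.2⟩).differentiableAt).differentiableWithinAt
    · intro x hx
      rw [interior_Icc] at hx
      rw [(hd x ⟨le_of_lt hx.1, le_of_lt hx.2⟩).deriv]
      exact hF' x ⟨le_of_lt hx.1, le_of_lt hx.2⟩
  calc (0:ℝ) = F 0 := h0.symm
  _ ≤ F t := hmono h0c ht ht.1

private lemma two_le_rpow_sum {p u : ℝ} (hp : 1 ≤ p) (hu0 : 0 ≤ u) (hu1 : u ≤ 1) :
    2 ≤ (1+u) ^ p + (1-u) ^ p := by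
  have hc := convexOn_rpow hp
  have hm1 : (1-u) ∈ Set.Ici (0:ℝ) := by simp; linarith
  have hm2 : (1+u) ∈ Set.Ici (0:ℝ) := by simp; linarith
  have h := hc.2 hm1 hm2 (by norm_num : (0:ℝ) ≤ 1/2) (by norm_num : (0:ℝ) ≤ 1/2)
    (by norm_num : (1/2:ℝ) + 1/2 = 1)
  simp only [smul_eq_mul] at h
  have h2 : (1/2*(1-u)+1/2*(1+u) : ℝ) = 1 := by ring
  rw [h2, Real.one_rpow] at h
  linarith

private lemma hDA_add' (p q u : ℝ) (h : -1 < u) (hpq : p - 1 = q) :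
    HasDerivAt (fun x : ℝ => (1+x) ^ p) (p * (1+u) ^ q) u := by
  rw [← hpq]; exact hDA_add p u h

private lemma hDA_sub' (p q u : ℝ) (h : u < 1) (hpq : p - 1 = q) :
    HasDerivAt (fun x : ℝ => (1-x) ^ p) (-(p * (1-u) ^ q)) u := by
  rw [← hpq]; exact hDA_sub p u h

private lemma N_lower {s t : ℝ} (hs : 5 ≤ s) (ht : t ∈ Set.Icc (0:ℝ) (1/2)) :
    (s+1)*s*t^2 + (s+1)*s*(s-1)*(s-2)/12*t^4 ≤ (1+t)^(s+1) + (1-t)^(s+1) - 2 := by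
  -- level 3
  have h3 : ∀ u ∈ Set.Icc (0:ℝ) (1/2), 0 ≤
      (s+1)*s*(s-1)*((1+u)^(s-2) - (1-u)^(s-2)) - 2*(s+1)*s*(s-1)*(s-2)*u := by
    intro u hu
    refine nonneg_of_deriv
      (F := fun u => (s+1)*s*(s-1)*((1+u)^(s-2) - (1-u)^(s-2)) - 2*(s+1)*s*(s-1)*(s-2)*u)
      (F' := fun u => (s+1)*s*(s-1)*((s-2)*(1+u)^(s-3) + (s-2)*(1-u)^(s-3))
        - 2*(s+1)*s*(s-1)*(s-2)) ?_ ?_ ?_ hu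
    · intro v hv
      have hv1 : -1 < v := by linarith [hv.1]
      have hv2 : v < 1 := by linarith [hv.2]
      have A := hDA_add' (s-2) (s-3) v hv1 (by ring)
      have B := hDA_sub' (s-2) (s-3) v hv2 (by ring)
      have C : HasDerivAt (fun y : ℝ => 2*(s+1)*s*(s-1)*(s-2)*y)
          (2*(s+1)*s*(s-1)*(s-2)) v := by
        simpa using (hasDerivAt_id v).const_mul (2*(s+1)*s*(s-1)*(s-2))
      have E := ((A.sub B).const_mul ((s+1)*s*(s-1))).sub C
      exact E.congr_deriv (by ring)
    · norm_num <;> ring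
    · intro v hv
      show 0 ≤ (s+1)*s*(s-1)*((s-2)*(1+v)^(s-3) + (s-2)*(1-v)^(s-3))
        - 2*(s+1)*s*(s-1)*(s-2)
      have h2 := two_le_rpow_sum (p := s-3) (by linarith) hv.1 (by linarith [hv.2])
      have a1 : (0:ℝ) ≤ (s+1)*s*(s-1)*(s-2) := by
        have b1 : (0:ℝ) ≤ s+1 := by linarith
        have b2 : (0:ℝ) ≤ s := by linarith
        have b3 : (0:ℝ) ≤ s-1 := by linarith
        have b4 : (0:ℝ) ≤ s-2 := by linarith
        exact mul_nonneg (mul_nonneg (mul_nonneg b1 b2) b3) b4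
      nlinarith [a1, h2]
  -- level 2
  have h2 : ∀ u ∈ Set.Icc (0:ℝ) (1/2), 0 ≤
      (s+1)*s*((1+u)^(s-1) + (1-u)^(s-1)) - 2*(s+1)*s - (s+1)*s*(s-1)*(s-2)*u^2 := by
    intro u hu
    refine nonneg_of_deriv
      (F := fun u => (s+1)*s*((1+u)^(s-1) + (1-u)^(s-1)) - 2*(s+1)*s
        - (s+1)*s*(s-1)*(s-2)*u^2)
      (F' := fun u => (s+1)*s*(s-1)*((1+u)^(s-2) - (1-u)^(s-2))
        - 2*(s+1)*s*(s-1)*(s-2)*u) ?_ ?_ ?_ hu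
    · intro v hv
      have hv1 : -1 < v := by linarith [hv.1]
      have hv2 : v < 1 := by linarith [hv.2]
      have A := hDA_add' (s-1) (s-2) v hv1 (by ring)
      have B := hDA_sub' (s-1) (s-2) v hv2 (by ring)
      have C : HasDerivAt (fun y : ℝ => (s+1)*s*(s-1)*(s-2)*y^2)
          ((s+1)*s*(s-1)*(s-2)*(2*v)) v := by
        have := (hasDerivAt_pow 2 v).const_mul ((s+1)*s*(s-1)*(s-2))
        exact this.congr_deriv (by norm_num)
      have E := (((A.add B).const_mul ((s+1)*s)).sub_const (2*(s+1)*s)).sub C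
      exact E.congr_deriv (by ring)
    · norm_num <;> ring
    · exact h3
  -- level 1
  have h1 : ∀ u ∈ Set.Icc (0:ℝ) (1/2), 0 ≤
      (s+1)*((1+u)^s - (1-u)^s) - 2*(s+1)*s*u - (s+1)*s*(s-1)*(s-2)/3*u^3 := by
    intro u hu
    refine nonneg_of_deriv
      (F := fun u => (s+1)*((1+u)^s - (1-u)^s) - 2*(s+1)*s*u
        - (s+1)*s*(s-1)*(s-2)/3*u^3)
      (F' := fun u => (s+1)*s*((1+u)^(s-1) + (1-u)^(s-1)) - 2*(s+1)*s
        - (s+1)*s*(s-1)*(s-2)*u^2) ?_ ?_ ?_ hu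
    · intro v hv
      have hv1 : -1 < v := by linarith [hv.1]
      have hv2 : v < 1 := by linarith [hv.2]
      have A := hDA_add' s (s-1) v hv1 (by ring)
      have B := hDA_sub' s (s-1) v hv2 (by ring)
      have C : HasDerivAt (fun y : ℝ => 2*(s+1)*s*y) (2*(s+1)*s) v := by
        simpa using (hasDerivAt_id v).const_mul (2*(s+1)*s)
      have D : HasDerivAt (fun y : ℝ => (s+1)*s*(s-1)*(s-2)/3*y^3)
          ((s+1)*s*(s-1)*(s-2)/3*(3*v^2)) v := by
        have := (hasDerivAt_pow 3 v).const_mul ((s+1)*s*(s-1)*(s-2)/3)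
        exact this.congr_deriv (by norm_num)
      have E := (((A.sub B).const_mul (s+1)).sub C).sub D
      exact E.congr_deriv (by ring)
    · norm_num <;> ring
    · exact h2
  -- level 0
  have h0 : 0 ≤ (1+t)^(s+1) + (1-t)^(s+1) - 2 - (s+1)*s*t^2
      - (s+1)*s*(s-1)*(s-2)/12*t^4 := by
    refine nonneg_of_deriv
      (F := fun u => (1+u)^(s+1) + (1-u)^(s+1) - 2 - (s+1)*s*u^2
        - (s+1)*s*(s-1)*(s-2)/12*u^4)
      (F' := fun u => (s+1)*((1+u)^s - (1-u)^s) - 2*(s+1)*s*u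
        - (s+1)*s*(s-1)*(s-2)/3*u^3) ?_ ?_ ?_ ht
    · intro v hv
      have hv1 : -1 < v := by linarith [hv.1]
      have hv2 : v < 1 := by linarith [hv.2]
      have A := hDA_add' (s+1) s v hv1 (by ring)
      have B := hDA_sub' (s+1) s v hv2 (by ring)
      have C : HasDerivAt (fun y : ℝ => (s+1)*s*y^2) ((s+1)*s*(2*v)) v := by
        have := (hasDerivAt_pow 2 v).const_mul ((s+1)*s)
        exact this.congr_deriv (by norm_num)
      have D : HasDerivAt (fun y : ℝ => (s+1)*s*(s-1)*(s-2)/12*y^4)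
          ((s+1)*s*(s-1)*(s-2)/12*(4*v^3)) v := by
        have := (hasDerivAt_pow 4 v).const_mul ((s+1)*s*(s-1)*(s-2)/12)
        exact this.congr_deriv (by norm_num)
      have E := ((((A.add B).sub_const 2).sub C).sub D)
      exact E.congr_deriv (by ring)
    · norm_num <;> ring
    · exact h1
  linarith

private lemma D_lower {s t : ℝ} (hs : 5 ≤ s) (ht : t ∈ Set.Icc (0:ℝ) (1/2)) :
    s*(s-1)*t^2 ≤ (1+t)^s + (1-t)^s - 2 := by
  have h1 : ∀ u ∈ Set.Icc (0:ℝ) (1/2), 0 ≤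
      s*((1+u)^(s-1) - (1-u)^(s-1)) - 2*s*(s-1)*u := by
    intro u hu
    refine nonneg_of_deriv
      (F := fun u => s*((1+u)^(s-1) - (1-u)^(s-1)) - 2*s*(s-1)*u)
      (F' := fun u => s*((s-1)*(1+u)^(s-2) + (s-1)*(1-u)^(s-2)) - 2*s*(s-1)) ?_ ?_ ?_ hu
    · intro v hv
      have hv1 : -1 < v := by linarith [hv.1]
      have hv2 : v < 1 := by linarith [hv.2]
      have A := hDA_add' (s-1) (s-2) v hv1 (by ring)
      have B := hDA_sub' (s-1) (s-2) v hv2 (by ring)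
      have C : HasDerivAt (fun y : ℝ => 2*s*(s-1)*y) (2*s*(s-1)) v := by
        simpa using (hasDerivAt_id v).const_mul (2*s*(s-1))
      have E := ((A.sub B).const_mul s).sub C
      exact E.congr_deriv (by ring)
    · norm_num <;> ring
    · intro v hv
      show 0 ≤ s*((s-1)*(1+v)^(s-2) + (s-1)*(1-v)^(s-2)) - 2*s*(s-1)
      have h2 := two_le_rpow_sum (p := s-2) (by linarith) hv.1 (by linarith [hv.2])
      have a1 : (0:ℝ) ≤ s*(s-1) := by nlinarith
      nlinarith [a1, h2]
  have h0 : 0 ≤ (1+t)^s + (1-t)^s - 2 - s*(s-1)*t^2 := by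
    refine nonneg_of_deriv
      (F := fun u => (1+u)^s + (1-u)^s - 2 - s*(s-1)*u^2)
      (F' := fun u => s*((1+u)^(s-1) - (1-u)^(s-1)) - 2*s*(s-1)*u) ?_ ?_ ?_ ht
    · intro v hv
      have hv1 : -1 < v := by linarith [hv.1]
      have hv2 : v < 1 := by linarith [hv.2]
      have A := hDA_add' s (s-1) v hv1 (by ring)
      have B := hDA_sub' s (s-1) v hv2 (by ring)
      have C : HasDerivAt (fun y : ℝ => s*(s-1)*y^2) (s*(s-1)*(2*v)) v := by
        have := (hasDerivAt_pow 2 v).const_mul (s*(s-1))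
        exact this.congr_deriv (by norm_num)
      have E := ((A.add B).sub_const 2).sub C
      exact E.congr_deriv (by ring)
    · norm_num <;> ring
    · exact h1
  linarith

private lemma D_upper {s c K t : ℝ} (hs : 5 ≤ s) (hc : c ≤ 1/2)
    (hK : (1+c)^(s-4) ≤ K) (ht : t ∈ Set.Icc (0:ℝ) c) :
    (1+t)^s + (1-t)^s - 2 ≤ s*(s-1)*t^2 + s*(s-1)*(s-2)*(s-3)*K/12*t^4 := by
  have hK1 : (1:ℝ) ≤ K := by
    have h := Real.rpow_le_rpow (x := 1) (y := 1+c) (z := s-4) (by norm_num)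
      (by linarith [le_trans ht.1 ht.2]) (by linarith)
    rw [Real.one_rpow] at h
    linarith
  have hc0 : 0 ≤ c := le_trans ht.1 ht.2
  -- level 3
  have h3 : ∀ u ∈ Set.Icc (0:ℝ) c, 0 ≤
      2*s*(s-1)*(s-2)*(s-3)*K*u - s*(s-1)*(s-2)*((1+u)^(s-3) - (1-u)^(s-3)) := by
    intro u hu
    refine nonneg_of_deriv
      (F := fun u => 2*s*(s-1)*(s-2)*(s-3)*K*u - s*(s-1)*(s-2)*((1+u)^(s-3) - (1-u)^(s-3)))
      (F' := fun u => 2*s*(s-1)*(s-2)*(s-3)*K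
        - s*(s-1)*(s-2)*((s-3)*(1+u)^(s-4) + (s-3)*(1-u)^(s-4))) ?_ ?_ ?_ hu
    · intro v hv
      have hv1 : -1 < v := by linarith [hv.1]
      have hv2 : v < 1 := by linarith [hv.2, hc]
      have A := hDA_add' (s-3) (s-4) v hv1 (by ring)
      have B := hDA_sub' (s-3) (s-4) v hv2 (by ring)
      have C : HasDerivAt (fun y : ℝ => 2*s*(s-1)*(s-2)*(s-3)*K*y)
          (2*s*(s-1)*(s-2)*(s-3)*K) v := by
        simpa using (hasDerivAt_id v).const_mul (2*s*(s-1)*(s-2)*(s-3)*K)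
      have E := C.sub ((A.sub B).const_mul (s*(s-1)*(s-2)))
      exact E.congr_deriv (by ring)
    · norm_num <;> ring
    · intro v hv
      show 0 ≤ 2*s*(s-1)*(s-2)*(s-3)*K
        - s*(s-1)*(s-2)*((s-3)*(1+v)^(s-4) + (s-3)*(1-v)^(s-4))
      have b1 : (1+v)^(s-4) ≤ K := by
        refine le_trans ?_ hK
        exact Real.rpow_le_rpow (by linarith [hv.1]) (by linarith [hv.2]) (by linarith)
      have b2 : (1-v)^(s-4) ≤ K := by
        refine le_trans ?_ hK1
        exact Real.rpow_le_one (by linarith [hv.2, hc]) (by linarith [hv.1]) (by linarith)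
      have a1 : (0:ℝ) ≤ s*(s-1)*(s-2)*(s-3) := by
        have b1 : (0:ℝ) ≤ s := by linarith
        have b2 : (0:ℝ) ≤ s-1 := by linarith
        have b3 : (0:ℝ) ≤ s-2 := by linarith
        have b4 : (0:ℝ) ≤ s-3 := by linarith
        exact mul_nonneg (mul_nonneg (mul_nonneg b1 b2) b3) b4
      nlinarith [a1, b1, b2]
  -- level 2
  have h2 : ∀ u ∈ Set.Icc (0:ℝ) c, 0 ≤
      2*s*(s-1) + s*(s-1)*(s-2)*(s-3)*K*u^2 - s*(s-1)*((1+u)^(s-2) + (1-u)^(s-2)) := by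
    intro u hu
    refine nonneg_of_deriv
      (F := fun u => 2*s*(s-1) + s*(s-1)*(s-2)*(s-3)*K*u^2
        - s*(s-1)*((1+u)^(s-2) + (1-u)^(s-2)))
      (F' := fun u => 2*s*(s-1)*(s-2)*(s-3)*K*u
        - s*(s-1)*(s-2)*((1+u)^(s-3) - (1-u)^(s-3))) ?_ ?_ ?_ hu
    · intro v hv
      have hv1 : -1 < v := by linarith [hv.1]
      have hv2 : v < 1 := by linarith [hv.2, hc]
      have A := hDA_add' (s-2) (s-3) v hv1 (by ring)
      have B := hDA_sub' (s-2) (s-3) v hv2 (by ring)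
      have C : HasDerivAt (fun y : ℝ => s*(s-1)*(s-2)*(s-3)*K*y^2)
          (s*(s-1)*(s-2)*(s-3)*K*(2*v)) v := by
        have := (hasDerivAt_pow 2 v).const_mul (s*(s-1)*(s-2)*(s-3)*K)
        exact this.congr_deriv (by norm_num)
      have E := (C.const_add (2*s*(s-1))).sub ((A.add B).const_mul (s*(s-1)))
      exact E.congr_deriv (by ring)
    · norm_num <;> ring
    · exact h3
  -- level 1
  have h1 : ∀ u ∈ Set.Icc (0:ℝ) c, 0 ≤
      2*s*(s-1)*u + s*(s-1)*(s-2)*(s-3)*K/3*u^3 - s*((1+u)^(s-1) - (1-u)^(s-1)) := by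
    intro u hu
    refine nonneg_of_deriv
      (F := fun u => 2*s*(s-1)*u + s*(s-1)*(s-2)*(s-3)*K/3*u^3
        - s*((1+u)^(s-1) - (1-u)^(s-1)))
      (F' := fun u => 2*s*(s-1) + s*(s-1)*(s-2)*(s-3)*K*u^2
        - s*((s-1)*(1+u)^(s-2) + (s-1)*(1-u)^(s-2))) ?_ ?_ ?_ hu
    · intro v hv
      have hv1 : -1 < v := by linarith [hv.1]
      have hv2 : v < 1 := by linarith [hv.2, hc]
      have A := hDA_add' (s-1) (s-2) v hv1 (by ring)
      have B := hDA_sub' (s-1) (s-2) v hv2 (by ring)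
      have C : HasDerivAt (fun y : ℝ => 2*s*(s-1)*y) (2*s*(s-1)) v := by
        simpa using (hasDerivAt_id v).const_mul (2*s*(s-1))
      have D : HasDerivAt (fun y : ℝ => s*(s-1)*(s-2)*(s-3)*K/3*y^3)
          (s*(s-1)*(s-2)*(s-3)*K/3*(3*v^2)) v := by
        have := (hasDerivAt_pow 3 v).const_mul (s*(s-1)*(s-2)*(s-3)*K/3)
        exact this.congr_deriv (by norm_num)
      have E := (C.add D).sub ((A.sub B).const_mul s)
      exact E.congr_deriv (by ring)
    · norm_num <;> ring
    · intro v hv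
      have := h2 v hv
      show 0 ≤ 2*s*(s-1) + s*(s-1)*(s-2)*(s-3)*K*v^2
        - s*((s-1)*(1+v)^(s-2) + (s-1)*(1-v)^(s-2))
      nlinarith [this]
  -- level 0
  have h0 : 0 ≤ s*(s-1)*t^2 + s*(s-1)*(s-2)*(s-3)*K/12*t^4
      - ((1+t)^s + (1-t)^s - 2) := by
    refine nonneg_of_deriv
      (F := fun u => s*(s-1)*u^2 + s*(s-1)*(s-2)*(s-3)*K/12*u^4
        - ((1+u)^s + (1-u)^s - 2))
      (F' := fun u => 2*s*(s-1)*u + s*(s-1)*(s-2)*(s-3)*K/3*u^3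
        - s*((1+u)^(s-1) - (1-u)^(s-1))) ?_ ?_ ?_ ht
    · intro v hv
      have hv1 : -1 < v := by linarith [hv.1]
      have hv2 : v < 1 := by linarith [hv.2, hc]
      have A := hDA_add' s (s-1) v hv1 (by ring)
      have B := hDA_sub' s (s-1) v hv2 (by ring)
      have C : HasDerivAt (fun y : ℝ => s*(s-1)*y^2) (s*(s-1)*(2*v)) v := by
        have := (hasDerivAt_pow 2 v).const_mul (s*(s-1))
        exact this.congr_deriv (by norm_num)
      have D : HasDerivAt (fun y : ℝ => s*(s-1)*(s-2)*(s-3)*K/12*y^4)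
          (s*(s-1)*(s-2)*(s-3)*K/12*(4*v^3)) v := by
        have := (hasDerivAt_pow 4 v).const_mul (s*(s-1)*(s-2)*(s-3)*K/12)
        exact this.congr_deriv (by norm_num)
      have E := (C.add D).sub (((A.add B).sub_const 2))
      exact E.congr_deriv (by ring)
    · norm_num <;> ring
    · exact h1
  linarith

private lemma g_upper {t : ℝ} (ht : t ∈ Set.Icc (0:ℝ) (1/2)) :
    ((1-t)*Real.log (1-t) + (1+t)*Real.log (1+t))/2 ≤ t^2/2 + t^4 := by
  have h1 : ∀ u ∈ Set.Icc (0:ℝ) (1/2), 0 ≤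
      u + 4*u^3 - (Real.log (1+u) - Real.log (1-u))/2 := by
    intro u hu
    refine nonneg_of_deriv
      (F := fun u => u + 4*u^3 - (Real.log (1+u) - Real.log (1-u))/2)
      (F' := fun u => 1 + 12*u^2 - (1/(1+u) + 1/(1-u))/2) ?_ ?_ ?_ hu
    · intro v hv
      have hv1 : (0:ℝ) < 1+v := by have := hv.1; linarith
      have hv2 : (0:ℝ) < 1-v := by have := hv.2; linarith
      have g1 : HasDerivAt (fun y : ℝ => 1+y) 1 v := by
        simpa using (hasDerivAt_id v).const_add 1
      have g2 : HasDerivAt (fun y : ℝ => 1-y) (-1) v := by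
        simpa using (hasDerivAt_id v).const_sub 1
      have L1 : HasDerivAt (fun y : ℝ => Real.log (1+y)) ((1+v)⁻¹) v := by
        exact ((Real.hasDerivAt_log (ne_of_gt hv1)).comp v g1).congr_deriv (by simp)
      have L2 : HasDerivAt (fun y : ℝ => Real.log (1-y)) (-(1-v)⁻¹) v := by
        have := (Real.hasDerivAt_log (ne_of_gt hv2)).comp v g2
        exact this.congr_deriv (by simp)
      have P : HasDerivAt (fun y : ℝ => y + 4*y^3) (1 + 4*(3*v^2)) v := by
        have := (hasDerivAt_id v).add ((hasDerivAt_pow 3 v).const_mul 4)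
        exact this.congr_deriv (by norm_num)
      have E := P.sub ((L1.sub L2).div_const 2)
      exact E.congr_deriv (by field_simp; ring)
    · norm_num
    · intro v hv
      show 0 ≤ 1 + 12*v^2 - (1/(1+v) + 1/(1-v))/2
      have hv1 : (0:ℝ) < 1+v := by have := hv.1; linarith
      have hv2 : (0:ℝ) < 1-v := by have := hv.2; linarith
      have d1 : 1/(1+v) ≤ 1 - v + v^2 := by
        rw [div_le_iff₀ hv1]; nlinarith [hv.1, hv.2]
      have d2 : 1/(1-v) ≤ 1 + v + 2*v^2 := by
        rw [div_le_iff₀ hv2]; nlinarith [hv.1, hv.2]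
      nlinarith [d1, d2, sq_nonneg v]
  have h0 : 0 ≤ t^2/2 + t^4 - ((1-t)*Real.log (1-t) + (1+t)*Real.log (1+t))/2 := by
    refine nonneg_of_deriv
      (F := fun u => u^2/2 + u^4 - ((1-u)*Real.log (1-u) + (1+u)*Real.log (1+u))/2)
      (F' := fun u => u + 4*u^3 - (Real.log (1+u) - Real.log (1-u))/2) ?_ ?_ ?_ ht
    · intro v hv
      have hv1 : (0:ℝ) < 1+v := by have := hv.1; linarith
      have hv2 : (0:ℝ) < 1-v := by have := hv.2; linarith
      have g1 : HasDerivAt (fun y : ℝ => 1+y) 1 v := by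
        simpa using (hasDerivAt_id v).const_add 1
      have g2 : HasDerivAt (fun y : ℝ => 1-y) (-1) v := by
        simpa using (hasDerivAt_id v).const_sub 1
      have L1 : HasDerivAt (fun y : ℝ => Real.log (1+y)) ((1+v)⁻¹) v := by
        exact ((Real.hasDerivAt_log (ne_of_gt hv1)).comp v g1).congr_deriv (by simp)
      have L2 : HasDerivAt (fun y : ℝ => Real.log (1-y)) (-(1-v)⁻¹) v := by
        have := (Real.hasDerivAt_log (ne_of_gt hv2)).comp v g2
        exact this.congr_deriv (by simp)
      have M1 : HasDerivAt (fun y : ℝ => (1+y)*Real.log (1+y))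
          (1*Real.log (1+v) + (1+v)*(1+v)⁻¹) v := g1.mul L1
      have M2 : HasDerivAt (fun y : ℝ => (1-y)*Real.log (1-y))
          ((-1)*Real.log (1-v) + (1-v)*(-(1-v)⁻¹)) v := g2.mul L2
      have P : HasDerivAt (fun y : ℝ => y^2/2 + y^4) ((2*v)/2 + 4*v^3) v := by
        have := ((hasDerivAt_pow 2 v).div_const 2).add (hasDerivAt_pow 4 v)
        exact this.congr_deriv (by norm_num)
      have E := P.sub ((M2.add M1).div_const 2)
      exact E.congr_deriv (by field_simp; ring)
    · norm_num
    · exact h1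
  linarith

private lemma exp_le_aux {x : ℝ} (h0 : 0 ≤ x) (h1 : x ≤ 1) :
    Real.exp x ≤ 1 + x + x^2 := by
  have h := Real.exp_bound (x := x) (by rw [abs_of_nonneg h0]; exact h1)
    (n := 2) (by norm_num)
  rw [abs_of_nonneg h0] at h
  rw [abs_le] at h
  have h2 := h.2
  simp [Finset.sum_range_succ] at h2
  nlinarith [h2, sq_nonneg x]

private lemma core_ineq {m t x A B : ℝ} (hm : 0 < m) (ht0 : 0 < t) (ht1 : t ≤ 1/48)
    (hx0 : 0 ≤ x) (hx1 : x ≤ t^2/2 + t^4) (hB0 : 0 ≤ B)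
    (hAB : B + 1/2 + m/8 ≤ A) (hBt : (3+3*B)*t ≤ m/144) :
    (1+x+x^2)*(1+B*t^2) < 1+A*t^2 := by
  have ht2 : t^2 ≤ 1/2 := by nlinarith
  have e1 : x ≤ t^2 := by nlinarith
  have e2 : x^2 ≤ t^4 := by nlinarith [mul_le_mul e1 e1 hx0 (sq_nonneg t)]
  have e3 : x + x^2 ≤ t^2/2 + 2*t^4 := by nlinarith
  have e4 : (x+x^2)*(B*t^2) ≤ (2*t^2)*(B*t^2) := by
    have h : x + x^2 ≤ 2*t^2 := by nlinarith
    exact mul_le_mul_of_nonneg_right h (mul_nonneg hB0 (sq_nonneg t))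
  have e6 : (2+2*B)*t^2 < m/8 := by
    have h1 : (2+2*B)*t^2 ≤ (3+3*B)*t*t := by nlinarith
    have h2 : (3+3*B)*t*t ≤ (m/144)*t := mul_le_mul_of_nonneg_right hBt ht0.le
    have h3 : (m/144)*t ≤ (m/144)*(1/48) := mul_le_mul_of_nonneg_left ht1 (by linarith)
    nlinarith
  have e7 : (2+2*B)*t^4 < (m/8)*t^2 := by nlinarith [e6, mul_pos ht0 ht0]
  have e0 : (B + 1/2 + m/8)*t^2 ≤ A*t^2 := mul_le_mul_of_nonneg_right hAB (sq_nonneg t)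
  nlinarith [e0, e3, e4, e7, sq_nonneg t, mul_nonneg hB0 (sq_nonneg t)]

set_option maxHeartbeats 2000000 in
theorem stmt18 (s : ℝ) (hs : 5 < s) :
    ∃ a b : ℝ, 0 < a ∧ 0 < b ∧ a ≠ b ∧
      a ^ (a / (a + b)) * b ^ (b / (a + b)) <
        ((s - 1) / (s + 1)) *
          ((a ^ (s + 1) + b ^ (s + 1) - 2 * ((a + b) / 2) ^ (s + 1)) /
            (a ^ s + b ^ s - 2 * ((a + b) / 2) ^ s)) := by
  have h5 : (5:ℝ) ≤ s := le_of_lt hs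
  obtain ⟨t, htdef⟩ : ∃ t : ℝ, t = (s-5)/(24*(s-2)*(s-3)*(s-4)*(3*s^2+3)) := ⟨_, rfl⟩
  have hp2 : (0:ℝ) < s-2 := by linarith
  have hp3 : (0:ℝ) < s-3 := by linarith
  have hp4 : (0:ℝ) < s-4 := by linarith
  have hp5 : (0:ℝ) < s-5 := by linarith
  have hq : (0:ℝ) < 3*s^2+3 := by positivity
  have hdpos : (0:ℝ) < 24*(s-2)*(s-3)*(s-4)*(3*s^2+3) := by
    have := mul_pos (mul_pos (mul_pos (mul_pos (by norm_num : (0:ℝ) < 24) hp2) hp3) hp4) hq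
    exact this
  have ht0 : 0 < t := by rw [htdef]; exact div_pos hp5 hdpos
  have hid : t * (24*(s-2)*(s-3)*(s-4)*(3*s^2+3)) = s-5 := by
    rw [htdef]; field_simp
  -- key smallness facts
  have u1 : (2:ℝ) ≤ (s-3)*(s-4) := by nlinarith [mul_pos hp5 hp2]
  have v1 : (6:ℝ) ≤ (s-2)*(s-3) := by nlinarith [mul_pos (show (0:ℝ) < s by linarith) hp5]
  have hA3 : 24*((s-2)*(s-3)*(s-4)*t) ≤ s-5 := by
    have hX : 0 ≤ 24*((s-2)*(s-3)*(s-4)*t) := by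
      have := mul_nonneg (mul_nonneg (mul_nonneg hp2.le hp3.le) hp4.le) ht0.le
      linarith
    have eq3 : (24*((s-2)*(s-3)*(s-4)*t))*(3*s^2+3) = s-5 := by linear_combination hid
    have h1 : (24*((s-2)*(s-3)*(s-4)*t))*1 ≤ (24*((s-2)*(s-3)*(s-4)*t))*(3*s^2+3) :=
      mul_le_mul_of_nonneg_left (by nlinarith [sq_nonneg s]) hX
    nlinarith [eq3, h1]
  have hA4 : 144*((3*s^2+3)*t) ≤ s-5 := by
    have hY : 0 ≤ (3*s^2+3)*t := mul_nonneg hq.le ht0.le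
    have eq4 : ((3*s^2+3)*t)*(24*((s-2)*(s-3)*(s-4))) = s-5 := by linear_combination hid
    have hfac : (144:ℝ) ≤ 24*((s-2)*(s-3)*(s-4)) := by
      have := mul_le_mul_of_nonneg_left u1 hp2.le
      nlinarith [this]
    have h1 : ((3*s^2+3)*t)*144 ≤ ((3*s^2+3)*t)*(24*((s-2)*(s-3)*(s-4))) :=
      mul_le_mul_of_nonneg_left hfac hY
    nlinarith [eq4, h1]
  have ht48 : t ≤ 1/48 := by
    have u2 : 2*(s-5) ≤ (s-2)*(s-3)*(s-4) := by
      have := mul_le_mul_of_nonneg_left u1 hp2.le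
      nlinarith [this]
    have u3 : 48*(s-5)*t ≤ 24*((s-2)*(s-3)*(s-4)*t) := by
      have := mul_le_mul_of_nonneg_left u2 (by linarith [ht0.le] : (0:ℝ) ≤ 24*t)
      nlinarith [this]
    have u4 : 48*t*(s-5) ≤ 1*(s-5) := by nlinarith [u3, hA3]
    have := le_of_mul_le_mul_right u4 hp5
    linarith
  have hthalf : t ≤ 1/2 := by linarith
  have hA1 : 48*((s-4)*t) ≤ 1 := by
    have hC : (0:ℝ) < 24*(s-2)*(s-3)*(3*s^2+3) := by
      exact mul_pos (mul_pos (mul_pos (by norm_num : (0:ℝ) < 24) hp2) hp3) hq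
    have hCge : 48*(s-5) ≤ 24*(s-2)*(s-3)*(3*s^2+3) := by
      have := mul_le_mul_of_nonneg_right v1 hq.le
      nlinarith [this, sq_nonneg s]
    have h48 : 48*((s-4)*t)*(24*(s-2)*(s-3)*(3*s^2+3)) = 48*(s-5) := by
      linear_combination 48*hid
    have hle : 48*((s-4)*t)*(24*(s-2)*(s-3)*(3*s^2+3)) ≤ 1*(24*(s-2)*(s-3)*(3*s^2+3)) := by
      linarith
    exact le_of_mul_le_mul_right hle hC
  have hst0 : 0 ≤ (s-4)*t := mul_nonneg hp4.le ht0.le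
  have hst1 : (s-4)*t ≤ 1 := by linarith
  -- K bound
  obtain ⟨K, hKdef⟩ : ∃ K : ℝ, K = 1 + 2*(s-4)*t := ⟨_, rfl⟩
  have hKb : (1+t)^(s-4) ≤ K := by
    have h1t : (0:ℝ) < 1+t := by linarith
    have hlog : Real.log (1+t) ≤ t := by
      have := Real.log_le_sub_one_of_pos h1t; linarith
    have hlog0 : 0 ≤ Real.log (1+t) := Real.log_nonneg (by linarith)
    have e1 : (1+t)^(s-4) = Real.exp (Real.log (1+t) * (s-4)) :=
      Real.rpow_def_of_pos h1t _
    have e2 : Real.log (1+t) * (s-4) ≤ (s-4)*t := by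
      have := mul_le_mul_of_nonneg_right hlog hp4.le
      linarith
    have e3 : Real.exp (Real.log (1+t) * (s-4)) ≤ Real.exp ((s-4)*t) :=
      Real.exp_le_exp.mpr e2
    have e4 : Real.exp ((s-4)*t) ≤ 1 + (s-4)*t + ((s-4)*t)^2 := exp_le_aux hst0 hst1
    have e5 : ((s-4)*t)^2 ≤ (s-4)*t := by nlinarith
    rw [e1, hKdef]
    linarith
  have hK1 : (1:ℝ) ≤ K := by rw [hKdef]; linarith
  have hK2 : K ≤ 2 := by rw [hKdef]; linarith
  -- main bounds
  have hNl : (s+1)*s*t^2 + (s+1)*s*(s-1)*(s-2)/12*t^4 ≤ (1-t)^(s+1) + (1+t)^(s+1) - 2 := by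
    have := N_lower h5 ⟨ht0.le, hthalf⟩; linarith
  have hDl : s*(s-1)*t^2 ≤ (1-t)^s + (1+t)^s - 2 := by
    have := D_lower h5 ⟨ht0.le, hthalf⟩; linarith
  have hDu : (1-t)^s + (1+t)^s - 2 ≤ s*(s-1)*t^2 + s*(s-1)*(s-2)*(s-3)*K/12*t^4 := by
    have := D_upper h5 hthalf hKb ⟨ht0.le, le_refl t⟩; linarith
  have hDpos : 0 < (1-t)^s + (1+t)^s - 2 := by
    have : 0 < s*(s-1)*t^2 :=
      mul_pos (mul_pos (by linarith : (0:ℝ) < s) (by linarith : (0:ℝ) < s-1)) (pow_pos ht0 2)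
    linarith
  -- the exponential / S side
  refine ⟨1-t, 1+t, by linarith, by linarith, by intro h; linarith [ht0], ?_⟩
  have hab : (1-t) + (1+t) = (2:ℝ) := by ring
  rw [hab]
  have h22 : (2:ℝ)/2 = 1 := by norm_num
  rw [h22, Real.one_rpow, Real.one_rpow]
  have hpos1 : (0:ℝ) < 1-t := by linarith
  have hpos2 : (0:ℝ) < 1+t := by linarith
  rw [Real.rpow_def_of_pos hpos1, Real.rpow_def_of_pos hpos2, ← Real.exp_add]
  obtain ⟨x, hxdef⟩ : ∃ x : ℝ, x = t^2/2 + t^4 := ⟨_, rfl⟩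
  have hx0 : 0 ≤ x := by rw [hxdef]; positivity
  have hx1 : x ≤ 1 := by
    have q1 : t^2 ≤ 1/4 := by nlinarith [ht48, ht0.le]
    have q2 : t^4 ≤ 1/16 := by nlinarith [q1, sq_nonneg (t^2)]
    rw [hxdef]; linarith
  have hexp : Real.exp (Real.log (1-t) * ((1-t)/2) + Real.log (1+t) * ((1+t)/2))
      ≤ 1 + x + x^2 := by
    have hg := g_upper ⟨ht0.le, hthalf⟩
    have e : Real.log (1-t) * ((1-t)/2) + Real.log (1+t) * ((1+t)/2)
        = ((1-t)*Real.log (1-t) + (1+t)*Real.log (1+t))/2 := by ring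
    calc Real.exp (Real.log (1-t) * ((1-t)/2) + Real.log (1+t) * ((1+t)/2))
        ≤ Real.exp x := by
          rw [e]; exact Real.exp_le_exp.mpr (by rw [hxdef]; exact hg)
      _ ≤ 1 + x + x^2 := exp_le_aux hx0 hx1
  -- core inequality
  have hB0 : 0 ≤ (s-2)*(s-3)*K/12 := by
    have := mul_nonneg (mul_nonneg hp2.le hp3.le) (by linarith : (0:ℝ) ≤ K)
    linarith
  have hAB : (s-2)*(s-3)*K/12 + 1/2 + (s-5)/8 ≤ (s-1)*(s-2)/12 := by
    rw [hKdef]; nlinarith [hA3]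
  have hBle : (s-2)*(s-3)*K/12 ≤ s^2 := by
    nlinarith [mul_le_mul_of_nonneg_left hK2 (mul_nonneg hp2.le hp3.le), sq_nonneg s]
  have hBt : (3+3*((s-2)*(s-3)*K/12))*t ≤ (s-5)/144 := by
    have h1 : (3+3*((s-2)*(s-3)*K/12))*t ≤ (3*s^2+3)*t :=
      mul_le_mul_of_nonneg_right (by linarith [hBle]) ht0.le
    linarith [hA4]
  have hcore : (1+x+x^2)*(1+((s-2)*(s-3)*K/12)*t^2) < 1+((s-1)*(s-2)/12)*t^2 :=
    core_ineq hp5 ht0 ht48 hx0 (le_of_eq hxdef) hB0 hAB hBt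
  -- assembly
  have hs1 : (0:ℝ) < s+1 := by linarith
  simp only [mul_one]
  rw [div_mul_div_comm, lt_div_iff₀ (mul_pos hs1 hDpos)]
  have hPpos : (0:ℝ) < (s+1)*s*(s-1)*t^2 :=
    mul_pos (mul_pos (mul_pos (by linarith : (0:ℝ) < s+1) (by linarith : (0:ℝ) < s))
      (by linarith : (0:ℝ) < s-1)) (pow_pos ht0 2)
  calc Real.exp (Real.log (1-t) * ((1-t)/2) + Real.log (1+t) * ((1+t)/2))
        * ((s+1) * ((1-t)^s + (1+t)^s - 2))
      ≤ (1+x+x^2) * ((s+1) * ((1-t)^s + (1+t)^s - 2)) :=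
        mul_le_mul_of_nonneg_right hexp (mul_pos hs1 hDpos).le
    _ ≤ (1+x+x^2) * ((s+1)*(s*(s-1)*t^2 + s*(s-1)*(s-2)*(s-3)*K/12*t^4)) := by
        refine mul_le_mul_of_nonneg_left ?_ (by positivity)
        exact mul_le_mul_of_nonneg_left hDu hs1.le
    _ = ((s+1)*s*(s-1)*t^2) * ((1+x+x^2)*(1+((s-2)*(s-3)*K/12)*t^2)) := by ring
    _ < ((s+1)*s*(s-1)*t^2) * (1+((s-1)*(s-2)/12)*t^2) :=
        mul_lt_mul_of_pos_left hcore hPpos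
    _ = (s-1)*((s+1)*s*t^2 + (s+1)*s*(s-1)*(s-2)/12*t^4) := by ring
    _ ≤ (s-1)*((1-t)^(s+1) + (1+t)^(s+1) - 2) := by
        have : (0:ℝ) ≤ s-1 := by linarith
        nlinarith [mul_le_mul_of_nonneg_left hNl this]
end

section
/- For all positive reals a ≠ b, 1 ≤ I(a,b)/λ_1(a,b) ≤ 4·log 2/e, where I(a,b) = (1/e)(b^b/a^a)^{1/(b-a)} and λ_1(a,b) = (b-a)²/(4(a log a + b log b - (a+b) log((a+b)/2))). -/
open Real Set Filter Topology

noncomputable section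

private def nu19 (t : ℝ) : ℝ := (1/1)*t + (5/2)*t^2 + (67/30)*t^3 + (17/20)*t^4 + (913/7500)*t^5 + (19/7500)*t^6
private def du19 (t : ℝ) : ℝ := (1/1) + (3/1)*t + (17/5)*t^2 + (9/5)*t^3 + (274/625)*t^4 + (24/625)*t^5
private def nl19 (t : ℝ) : ℝ := (1/1)*t + (-5/2)*t^2 + (337/144)*t^3 + (-97/96)*t^4 + (20471/103680)*t^5 + (-2831/207360)*t^6
private def dl19 (t : ℝ) : ℝ := (1/1) + (-3/1)*t + (505/144)*t^2 + (-145/72)*t^3 + (12139/20736)*t^4 + (-1627/20736)*t^5 + (385/110592)*t^6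

private lemma du19_pos {t : ℝ} (h0 : 0 ≤ t) : 0 < du19 t := by
  unfold du19; positivity

private lemma dl19_pos {t : ℝ} (h0 : 0 ≤ t) (h1 : t ≤ 255/256) : 0 < dl19 t := by
  have key : dl19 t = (1 - (1/12)*t) * (1 - (1/4)*t) * (1 - (5/12)*t) * (1 - (7/12)*t) * (1 - (3/4)*t) * (1 - (11/12)*t) := by unfold dl19; ring
  rw [key]
  have h2 : (0:ℝ) < 1 - (11/12)*t := by nlinarith
  have h3 : (0:ℝ) < 1 - (3/4)*t := by nlinarith
  have h4 : (0:ℝ) < 1 - (7/12)*t := by nlinarith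
  have h5 : (0:ℝ) < 1 - (5/12)*t := by nlinarith
  have h6 : (0:ℝ) < 1 - (1/4)*t := by nlinarith
  have h7 : (0:ℝ) < 1 - (1/12)*t := by nlinarith
  positivity

private lemma nl19_nonneg {t : ℝ} (h0 : 0 ≤ t) (h1 : t ≤ 255/256) : 0 ≤ nl19 t := by
  have key : nl19 t = (247/1280) * t * (1 - (1/4)*t) * (1 - (5/12)*t) * (1 - (7/12)*t) * (1 - (3/4)*t) * (1 - (11/12)*t) + (139/1280) * t * (1 - (1/12)*t) * (1 - (5/12)*t) * (1 - (7/12)*t) * (1 - (3/4)*t) * (1 - (11/12)*t) + (127/640) * t * (1 - (1/12)*t) * (1 - (1/4)*t) * (1 - (7/12)*t) * (1 - (3/4)*t) * (1 - (11/12)*t) + (127/640) * t * (1 - (1/12)*t) * (1 - (1/4)*t) * (1 - (5/12)*t) * (1 - (3/4)*t) * (1 - (11/12)*t) + (139/1280) * t * (1 - (1/12)*t) * (1 - (1/4)*t) * (1 - (5/12)*t) * (1 - (7/12)*t) * (1 - (11/12)*t) + (247/1280) * t * (1 - (1/12)*t) * (1 - (1/4)*t) * (1 - (5/12)*t) * (1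 - (7/12)*t) * (1 - (3/4)*t) := by unfold nl19; ring
  rw [key]
  have h2 : (0:ℝ) < 1 - (11/12)*t := by nlinarith
  have h3 : (0:ℝ) < 1 - (3/4)*t := by nlinarith
  have h4 : (0:ℝ) < 1 - (7/12)*t := by nlinarith
  have h5 : (0:ℝ) < 1 - (5/12)*t := by nlinarith
  have h6 : (0:ℝ) < 1 - (1/4)*t := by nlinarith
  have h7 : (0:ℝ) < 1 - (1/12)*t := by nlinarith
  positivity

private lemma certU19 {t : ℝ} (h0 : 0 ≤ t) (h1 : t ≤ 255/256) :
    0 ≤ (1+t)*(((1/1) + (5/1)*t + (67/10)*t^2 + (17/5)*t^3 + (913/1500)*t^4 + (19/1250)*t^5) * du19 t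
        - nu19 t * ((3/1) + (34/5)*t + (27/5)*t^2 + (1096/625)*t^3 + (24/125)*t^4)) - (du19 t)^2 := by
  have hB : (0:ℝ) ≤ 255/256 - t := by linarith
  have key : (1+t)*(((1/1) + (5/1)*t + (67/10)*t^2 + (17/5)*t^3 + (913/1500)*t^4 + (19/1250)*t^5) * du19 t
        - nu19 t * ((3/1) + (34/5)*t + (27/5)*t^2 + (1096/625)*t^3 + (24/125)*t^4)) - (du19 t)^2
      = t^6 * ((3023656976384/2021632330078125) * (255/256 - t)^5 + (4830764466176/404326466015625) * t^1 * (255/256 - t)^4 + (15381255159808/404326466015625) * t^2 * (255/256 - t)^3 + (24412704096256/404326466015625) * t^3 * (255/256 - t)^2 + (96618058657024/2021632330078125) * t^4 * (255/256 - t)^1 + (30527313013358/2021632330078125) * t^5) := by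
    unfold nu19 du19; ring
  rw [key]; positivity

private lemma certL19 {t : ℝ} (h0 : 0 ≤ t) (h1 : t ≤ 255/256) :
    0 ≤ (dl19 t)^2 - (1-t)*(((1/1) + (-5/1)*t + (337/48)*t^2 + (-97/24)*t^3 + (20471/20736)*t^4 + (-2831/34560)*t^5) * dl19 t
        - nl19 t * ((-3/1) + (505/72)*t + (-145/24)*t^2 + (12139/5184)*t^3 + (-8135/20736)*t^4 + (385/18432)*t^5)) := by
  have hB : (0:ℝ) ≤ 255/256 - t := by linarith
  have key : (dl19 t)^2 - (1-t)*(((1/1) + (-5/1)*t + (337/48)*t^2 + (-97/24)*t^3 + (20471/20736)*t^4 + (-2831/34560)*t^5) * dl19 t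
        - nl19 t * ((-3/1) + (505/72)*t + (-145/24)*t^2 + (12139/5184)*t^3 + (-8135/20736)*t^4 + (385/18432)*t^5))
      = t^6 * ((76347338653696/66810905244421875) * (255/256 - t)^6 + (76645570445312/22270301748140625) * t^1 * (255/256 - t)^5 + (56341207515136/13362181048884375) * t^2 * (255/256 - t)^4 + (35877047230976/13362181048884375) * t^3 * (255/256 - t)^3 + (66774460255487/71264965594050000) * t^4 * (255/256 - t)^2 + (46596006104450081/273657467881152000000) * t^5 * (255/256 - t)^1 + (1590457149471125779/124544554271244288000000) * t^6) := by
    unfold nl19 dl19; ring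
  rw [key]; positivity

private lemma hasDerivAt_nu19 (x : ℝ) : HasDerivAt nu19 ((1:ℝ) + (5:ℝ)*x + (67/10:ℝ)*x^2 + (17/5:ℝ)*x^3 + (913/1500:ℝ)*x^4 + (19/1250:ℝ)*x^5) x := by
  have h := (((((((hasDerivAt_id x).const_mul (1:ℝ)).add ((hasDerivAt_pow 2 x).const_mul (5/2:ℝ))).add ((hasDerivAt_pow 3 x).const_mul (67/30:ℝ))).add ((hasDerivAt_pow 4 x).const_mul (17/20:ℝ))).add ((hasDerivAt_pow 5 x).const_mul (913/7500:ℝ))).add ((hasDerivAt_pow 6 x).const_mul (19/7500:ℝ)))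
  convert h using 1
  · rfl
  · rfl
  · unfold nu19; funext t; simp only [id_eq, Pi.add_apply]; ring
  · push_cast; ring

private lemma hasDerivAt_du19 (x : ℝ) : HasDerivAt du19 ((3:ℝ) + (34/5:ℝ)*x + (27/5:ℝ)*x^2 + (1096/625:ℝ)*x^3 + (24/125:ℝ)*x^4) x := by
  have h := ((((((hasDerivAt_const x (1:ℝ)).add ((hasDerivAt_id x).const_mul (3:ℝ))).add ((hasDerivAt_pow 2 x).const_mul (17/5:ℝ))).add ((hasDerivAt_pow 3 x).const_mul (9/5:ℝ))).add ((hasDerivAt_pow 4 x).const_mul (274/625:ℝ))).add ((hasDerivAt_pow 5 x).const_mul (24/625:ℝ)))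
  convert h using 1
  · rfl
  · rfl
  · unfold du19; funext t; simp only [id_eq, Pi.add_apply]; ring
  · push_cast; ring

private lemma hasDerivAt_nl19 (x : ℝ) : HasDerivAt nl19 ((1:ℝ) + (-5:ℝ)*x + (337/48:ℝ)*x^2 + (-97/24:ℝ)*x^3 + (20471/20736:ℝ)*x^4 + (-2831/34560:ℝ)*x^5) x := by
  have h := (((((((hasDerivAt_id x).const_mul (1:ℝ)).add ((hasDerivAt_pow 2 x).const_mul (-5/2:ℝ))).add ((hasDerivAt_pow 3 x).const_mul (337/144:ℝ))).add ((hasDerivAt_pow 4 x).const_mul (-97/96:ℝ))).add ((hasDerivAt_pow 5 x).const_mul (20471/103680:ℝ))).add ((hasDerivAt_pow 6 x).const_mul (-2831/207360:ℝ)))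
  convert h using 1
  · rfl
  · rfl
  · unfold nl19; funext t; simp only [id_eq, Pi.add_apply]; ring
  · push_cast; ring

private lemma hasDerivAt_dl19 (x : ℝ) : HasDerivAt dl19 ((-3:ℝ) + (505/72:ℝ)*x + (-145/24:ℝ)*x^2 + (12139/5184:ℝ)*x^3 + (-8135/20736:ℝ)*x^4 + (385/18432:ℝ)*x^5) x := by
  have h := (((((((hasDerivAt_const x (1:ℝ)).add ((hasDerivAt_id x).const_mul (-3:ℝ))).add ((hasDerivAt_pow 2 x).const_mul (505/144:ℝ))).add ((hasDerivAt_pow 3 x).const_mul (-145/72:ℝ))).add ((hasDerivAt_pow 4 x).const_mul (12139/20736:ℝ))).add ((hasDerivAt_pow 5 x).const_mul (-1627/20736:ℝ))).add ((hasDerivAt_pow 6 x).const_mul (385/110592:ℝ)))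
  convert h using 1
  · rfl
  · rfl
  · unfold dl19; funext t; simp only [id_eq, Pi.add_apply]; ring
  · push_cast; ring

set_option maxHeartbeats 2000000 in
private lemma certF19 {t u r : ℝ} (h0 : 0 ≤ t) (h1 : t ≤ 255/256)
    (hdu : 0 < du19 t) (hdl : 0 < dl19 t)
    (hu : u * du19 t = nu19 t) (hr : r * dl19 t = nl19 t) :
    0 ≤ 2*t*(r - u) + (1-t)*r^2 - (1+t)*u^2 - 2*t*u*r := by
  have hB : (0:ℝ) ≤ 255/256 - t := by linarith
  have hpos : 0 < ((du19 t)*(dl19 t))^2 := by positivity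
  have key : (2*t*(r - u) + (1-t)*r^2 - (1+t)*u^2 - 2*t*u*r) * ((du19 t)*(dl19 t))^2
      = t^7 * ((22300745198530623141535718272648361505980416/935267324398334039577637604725055694580078125) * (255/256 - t)^18 + (89986061631011315051845690380845084534420537344/210435147989625158904968461063137531280517578125) * t^1 * (255/256 - t)^17 + (44026749436734062287669841122584756483946184704/12378538117036774053233438886066913604736328125) * t^2 * (255/256 - t)^16 + (225432777668231089241979156886295419926580559872/12378538117036774053233438886066913604736328125) * t^3 * (255/256 - t)^15 + (159080509264775453194850319430739357500757245952/2475707623407354810646687777213382720947265625) * t^4 * (255/256 - t)^14 + (2050981640280338137544965407438513818059531091968/12378538117036774053233438886066913604736328125) * t^5 * (255/256 - t)^13 + (799903436404256930686844206552284477214410407936/2475707623407354810646687777213382720947265625) * t^6 * (255/256 - t)^12 + (6020521094574895264735624128646461006781890953216/12378538117036774053233438886066913604736328125) * t^7 * (255/256 - t)^11 + (2359181039664740614424655384657595213493429075968/4126179372345591351077812962022304534912109375) * t^8 * (255/256 - t)^10 + (48370243028914393216271906164718680525991051264/91692874941013141135062510267162322998046875) * t^9 * (255/256 - t)^9 + (4725131609406830958104481353509310448288992854016/12378538117036774053233438886066913604736328125)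 * t^10 * (255/256 - t)^8 + (2664649855373775792575363112550766054509782237184/12378538117036774053233438886066913604736328125) * t^11 * (255/256 - t)^7 + (9250294511564434709883394858361610897905942528/99028304936294192425867511088535308837890625) * t^12 * (255/256 - t)^6 + (378053085769760204383777899061495818629781901312/12378538117036774053233438886066913604736328125) * t^13 * (255/256 - t)^5 + (18016085789348766333859347763485106576690461776/2475707623407354810646687777213382720947265625) * t^14 * (255/256 - t)^4 + (237108633277050483601941527638916029759031454193/198056609872588384851735022177070617675781250000) * t^15 * (255/256 - t)^3 + (6267812391955626256429806099834120113397670689731/50702492127382626522044165677330078125000000000000) * t^16 * (255/256 - t)^2 + (481964093430370122765383753216159678916598911051457/73552415246123063541312069675913500000000000000000000) * t^17 * (255/256 - t)^1 + (343360468909065503141414808878971182269253634699429/3765883660601500853315177967406771200000000000000000000) * t^18) := by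
    have e1 : (2*t*(r - u) + (1-t)*r^2 - (1+t)*u^2 - 2*t*u*r) * ((du19 t)*(dl19 t))^2
        = 2*t*((r*dl19 t)*(du19 t)^2*(dl19 t) - (u*du19 t)*(dl19 t)^2*(du19 t))
          + (1-t)*(r*dl19 t)^2*(du19 t)^2 - (1+t)*(u*du19 t)^2*(dl19 t)^2
          - 2*t*((u*du19 t)*(dl19 t))*((r*dl19 t)*(du19 t)) := by ring
    rw [e1, hu, hr]
    unfold nu19 du19 nl19 dl19
    ring
  have h2 : (0:ℝ) ≤ t^7 * ((22300745198530623141535718272648361505980416/935267324398334039577637604725055694580078125) * (255/256 - t)^18 + (89986061631011315051845690380845084534420537344/210435147989625158904968461063137531280517578125) * t^1 * (255/256 - t)^17 + (44026749436734062287669841122584756483946184704/12378538117036774053233438886066913604736328125) * t^2 * (255/256 - t)^16 + (225432777668231089241979156886295419926580559872/12378538117036774053233438886066913604736328125) * t^3 * (255/256 - t)^15 + (159080509264775453194850319430739357500757245952/2475707623407354810646687777213382720947265625) * t^4 * (255/256 - t)^14 + (2050981640280338137544965407438513818059531091968/12378538117036774053233438886066913604736328125) * t^5 * (255/256 - t)^13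 + (799903436404256930686844206552284477214410407936/2475707623407354810646687777213382720947265625) * t^6 * (255/256 - t)^12 + (6020521094574895264735624128646461006781890953216/12378538117036774053233438886066913604736328125) * t^7 * (255/256 - t)^11 + (2359181039664740614424655384657595213493429075968/4126179372345591351077812962022304534912109375) * t^8 * (255/256 - t)^10 + (48370243028914393216271906164718680525991051264/91692874941013141135062510267162322998046875) * t^9 * (255/256 - t)^9 + (4725131609406830958104481353509310448288992854016/12378538117036774053233438886066913604736328125) * t^10 * (255/256 - t)^8 + (2664649855373775792575363112550766054509782237184/12378538117036774053233438886066913604736328125) * t^11 * (255/256 - t)^7 + (9250294511564434709883394858361610897905942528/99028304936294192425867511088535308837890625) * t^12 * (255/256 - t)^6 + (378053085769760204383777899061495818629781901312/12378538117036774053233438886066913604736328125) * t^13 * (255/256 - t)^5 + (18016085789348766333859347763485106576690461776/2475707623407354810646687777213382720947265625) * t^14 * (255/256 - t)^4 + (237108633277050483601941527638916029759031454193/198056609872588384851735022177070617675781250000) * t^15 * (255/256 - t)^3 + (6267812391955626256429806099834120113397670689731/50702492127382626522044165677330078125000000000000) * t^16 * (255/256 - t)^2 + (481964093430370122765383753216159678916598911051457/73552415246123063541312069675913500000000000000000000)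 * t^17 * (255/256 - t)^1 + (343360468909065503141414808878971182269253634699429/3765883660601500853315177967406771200000000000000000000) * t^18) := by positivity
  exact (mul_nonneg_iff_of_pos_right hpos).mp (key ▸ h2)

private lemma logUB19 {t : ℝ} (h0 : 0 ≤ t) (h1 : t ≤ 255/256) :
    Real.log (1+t) ≤ nu19 t / du19 t := by
  set f : ℝ → ℝ := fun s => nu19 s / du19 s - Real.log (1+s) with hf
  have hderiv : ∀ x ∈ Icc (0:ℝ) (255/256), HasDerivAt f
      ((((1:ℝ) + (5:ℝ)*x + (67/10:ℝ)*x^2 + (17/5:ℝ)*x^3 + (913/1500:ℝ)*x^4 + (19/1250:ℝ)*x^5) * du19 x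
        - nu19 x * ((3:ℝ) + (34/5:ℝ)*x + (27/5:ℝ)*x^2 + (1096/625:ℝ)*x^3 + (24/125:ℝ)*x^4)) / (du19 x)^2
        - 1/(1+x)) x := by
    intro x hx
    have hdu := du19_pos hx.1
    have h1x : (0:ℝ) < 1 + x := by linarith [hx.1]
    have hlog : HasDerivAt (fun s : ℝ => Real.log (1+s)) (1/(1+x)) x := by
      have h' : HasDerivAt (fun s : ℝ => 1 + s) 1 x := (hasDerivAt_id x).const_add 1
      simpa using h'.log h1x.ne'
    exact ((hasDerivAt_nu19 x).div (hasDerivAt_du19 x) hdu.ne').sub hlog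
  have hmono : MonotoneOn f (Icc (0:ℝ) (255/256)) := by
    apply monotoneOn_of_deriv_nonneg (convex_Icc _ _)
    · exact fun x hx => ((hderiv x hx).continuousAt).continuousWithinAt
    · intro x hx
      rw [interior_Icc] at hx
      exact ((hderiv x ⟨hx.1.le, hx.2.le⟩).differentiableAt).differentiableWithinAt
    · intro x hx
      rw [interior_Icc] at hx
      rw [(hderiv x ⟨hx.1.le, hx.2.le⟩).deriv]
      have hdu := du19_pos hx.1.le
      have h1x : (0:ℝ) < 1 + x := by linarith [hx.1]
      have hc := certU19 hx.1.le hx.2.le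
      rw [sub_nonneg, div_le_div_iff₀ h1x (by positivity)]
      nlinarith [hc]
  have h00 : f 0 = 0 := by simp [hf, nu19, du19]
  have := hmono (left_mem_Icc.mpr (by norm_num)) ⟨h0, h1⟩ h0
  rw [h00] at this
  simpa [hf, sub_nonneg] using this

private lemma logLB19 {t : ℝ} (h0 : 0 ≤ t) (h1 : t ≤ 255/256) :
    nl19 t / dl19 t ≤ -Real.log (1-t) := by
  set f : ℝ → ℝ := fun s => -Real.log (1-s) - nl19 s / dl19 s with hf
  have hderiv : ∀ x ∈ Icc (0:ℝ) (255/256), HasDerivAt f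
      (1/(1-x) - (((1:ℝ) + (-5:ℝ)*x + (337/48:ℝ)*x^2 + (-97/24:ℝ)*x^3 + (20471/20736:ℝ)*x^4 + (-2831/34560:ℝ)*x^5) * dl19 x
        - nl19 x * ((-3:ℝ) + (505/72:ℝ)*x + (-145/24:ℝ)*x^2 + (12139/5184:ℝ)*x^3 + (-8135/20736:ℝ)*x^4 + (385/18432:ℝ)*x^5)) / (dl19 x)^2) x := by
    intro x hx
    have hdl := dl19_pos hx.1 hx.2
    have h1x : (0:ℝ) < 1 - x := by
      have := hx.2; linarith
    have hlog : HasDerivAt (fun s : ℝ => -Real.log (1-s)) (1/(1-x)) x := by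
      have h' : HasDerivAt (fun s : ℝ => 1 - s) (-1) x := (hasDerivAt_id x).const_sub 1
      have := (h'.log h1x.ne').neg
      convert this using 1
      · rfl
      · rfl
      · rfl
      · ring
    exact hlog.sub ((hasDerivAt_nl19 x).div (hasDerivAt_dl19 x) hdl.ne')
  have hmono : MonotoneOn f (Icc (0:ℝ) (255/256)) := by
    apply monotoneOn_of_deriv_nonneg (convex_Icc _ _)
    · exact fun x hx => ((hderiv x hx).continuousAt).continuousWithinAt
    · intro x hx
      rw [interior_Icc] at hx
      exact ((hderiv x ⟨hx.1.le, hx.2.le⟩).differentiableAt).differentiableWithinAt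
    · intro x hx
      rw [interior_Icc] at hx
      rw [(hderiv x ⟨hx.1.le, hx.2.le⟩).deriv]
      have hdl := dl19_pos hx.1.le hx.2.le
      have h1x : (0:ℝ) < 1 - x := by linarith [hx.2]
      have hc := certL19 hx.1.le hx.2.le
      rw [sub_nonneg, div_le_div_iff₀ (by positivity) h1x]
      nlinarith [hc]
  have h00 : f 0 = 0 := by simp [hf, nl19, dl19]
  have := hmono (left_mem_Icc.mpr (by norm_num)) ⟨h0, h1⟩ h0
  rw [h00] at this
  simpa [hf, sub_nonneg] using this

private lemma Gaux2 {x p m : ℝ} (hx1 : x < 1) (hB : 255/256 ≤ x)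
    (hp0 : 0 ≤ p) (hp7 : p ≤ 0.6931472) (hm55 : (5.5451768:ℝ) ≤ m) (hm0 : 0 ≤ m) :
    0 ≤ 2*x*(m - p) + (1-x)*m^2 - (1+x)*p^2 - 2*x*p*m := by
  have hxp : (0.61:ℝ) ≤ 2*x*(1-p) := by
    have hb : (0.3068528:ℝ) ≤ 1-p := by linarith
    have := mul_le_mul hB hb (by norm_num) (by linarith)
    nlinarith [this]
  have h1 : (0.61:ℝ)*m ≤ 2*x*(1-p)*m := mul_le_mul_of_nonneg_right hxp hm0
  have h1b : (3.38:ℝ) ≤ 0.61*m := by linarith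
  have h2 : x*p ≤ p := by
    have := mul_le_mul_of_nonneg_right hx1.le hp0
    linarith [this]
  have h3 : p^2 ≤ 0.6931472^2 := by
    have := mul_le_mul hp7 hp7 hp0 (by norm_num)
    calc p^2 = p*p := sq p
    _ ≤ 0.6931472*0.6931472 := this
    _ = 0.6931472^2 := (sq (0.6931472:ℝ)).symm
  have h4 : x*p^2 ≤ p^2 := by
    have := mul_le_mul_of_nonneg_right hx1.le (sq_nonneg p)
    linarith [this]
  have hT : 0 ≤ (1-x)*m^2 := mul_nonneg (by linarith) (sq_nonneg m)
  have e : 2*x*(m - p) + (1-x)*m^2 - (1+x)*p^2 - 2*x*p*m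
      = 2*x*(1-p)*m - 2*(x*p) - (p^2 + x*p^2) + (1-x)*m^2 := by ring
  rw [e]
  linarith [hT, h1, h1b, h2, h3, h4]

private lemma Gkey19 {x : ℝ} (hx0 : 0 < x) (hx1 : x < 1) :
    0 ≤ 2*x*((-Real.log (1-x)) - Real.log (1+x)) + (1-x)*(-Real.log (1-x))^2
      - (1+x)*(Real.log (1+x))^2 - 2*x*(Real.log (1+x))*(-Real.log (1-x)) := by
  set p := Real.log (1+x) with hp
  set m := -Real.log (1-x) with hm
  have h1x : (0:ℝ) < 1 - x := by linarith
  have hp0 : 0 ≤ p := Real.log_nonneg (by linarith)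
  have hpx : p ≤ x := by
    have := Real.log_le_sub_one_of_pos (show (0:ℝ) < 1+x by linarith)
    simpa using this
  have hp1 : p ≤ 1 := hpx.trans hx1.le
  have hm0 : 0 ≤ m := by
    rw [hm, neg_nonneg]
    exact Real.log_nonpos (by linarith) (by linarith)
  rcases le_or_gt x (255/256) with hB | hB
  · -- region 1
    have hdu := du19_pos hx0.le
    have hdl := dl19_pos hx0.le hB
    set u := nu19 x / du19 x with hu
    set r := nl19 x / dl19 x with hr
    have hu' : u * du19 x = nu19 x := div_mul_cancel₀ _ hdu.ne'
    have hr' : r * dl19 x = nl19 x := div_mul_cancel₀ _ hdl.ne'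
    have hF := certF19 hx0.le hB hdu hdl hu' hr'
    have hpu : p ≤ u := logUB19 hx0.le hB
    have hmr : r ≤ m := logLB19 hx0.le hB
    have hr0 : 0 ≤ r := div_nonneg (nl19_nonneg hx0.le hB) hdl.le
    have hT1 : 0 ≤ (m - r) * (2*x*(1-p) + (1-x)*(m+r)) := by
      apply mul_nonneg (by linarith)
      have : 0 ≤ 2*x*(1-p) := by nlinarith
      nlinarith
    have hT2 : 0 ≤ (u - p) * (2*x + (1+x)*(u+p) + 2*x*r) := by
      apply mul_nonneg (by linarith)
      have hu0 : 0 ≤ u := hp0.trans hpu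
      nlinarith
    nlinarith [hF, hT1, hT2]
  · -- region 2
    have hl2u : Real.log 2 < 0.6931472 := by
      have := Real.log_two_lt_d9; linarith
    have hl2l : (0.6931471:ℝ) < Real.log 2 := by
      have := Real.log_two_gt_d9; linarith
    have hpl2 : p ≤ Real.log 2 := by
      rw [hp]
      exact Real.log_le_log (by linarith) (by linarith)
    have hm8 : 8 * Real.log 2 ≤ m := by
      rw [hm, le_neg]
      have : Real.log (1-x) ≤ Real.log (256⁻¹) := by
        apply Real.log_le_log h1x
        rw [show ((256:ℝ))⁻¹ = 1 - 255/256 by norm_num]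
        linarith
      rw [Real.log_inv, show ((256:ℝ)) = 2^(8:ℕ) by norm_num, Real.log_pow] at this
      push_cast at this
      linarith
    exact Gaux2 hx1 hB.le hp0 (by linarith) (by linarith) hm0

private def Pf19 (t : ℝ) : ℝ := (1+t)*Real.log (1+t) - (1-t)*Real.log (1-t)
private def Qf19 (t : ℝ) : ℝ := (1+t)*Real.log (1+t) + (1-t)*Real.log (1-t)
private def gf19 (t : ℝ) : ℝ := Pf19 t/(2*t) - 1 + Real.log (Qf19 t) - 2*Real.log t

private lemma Qf19_pos {t : ℝ} (ht0 : 0 < t) (ht1 : t < 1) : 0 < Qf19 t := by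
  have h1t : (0:ℝ) < 1 + t := by linarith
  have h1t' : (0:ℝ) < 1 - t := by linarith
  have hp_lb : t/(1+t) ≤ Real.log (1+t) := by
    have h := Real.log_le_sub_one_of_pos (show (0:ℝ) < (1+t)⁻¹ by positivity)
    rw [Real.log_inv] at h
    have e : (1+t)⁻¹ - 1 = -(t/(1+t)) := by field_simp; ring
    rw [e] at h
    linarith
  have hm_ub : -Real.log (1-t) < t/(1-t) := by
    have h := Real.log_lt_sub_one_of_pos (show (0:ℝ) < (1-t)⁻¹ by positivity)
      (by
        intro hcon
        rw [inv_eq_one] at hcon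
        linarith)
    rw [Real.log_inv] at h
    have e : (1-t)⁻¹ - 1 = t/(1-t) := by field_simp; ring
    rw [e] at h
    linarith
  have h1 : t ≤ (1+t)*Real.log (1+t) := by
    have := (div_le_iff₀ h1t).mp hp_lb
    linarith
  have h2 : (1-t)*(-Real.log (1-t)) < t := by
    have := (lt_div_iff₀ h1t').mp hm_ub
    linarith
  unfold Qf19
  nlinarith [h1, h2]

private lemma hasDerivAt_gf19 {x : ℝ} (hx0 : 0 < x) (hx1 : x < 1) :
    HasDerivAt gf19
      (((Real.log (1+x) + Real.log (1-x) + 2)*(2*x) - Pf19 x*2)/(2*x)^2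
        + (Real.log (1+x) - Real.log (1-x))/Qf19 x - 2*x⁻¹) x := by
  have h1x : (0:ℝ) < 1 + x := by linarith
  have h1x' : (0:ℝ) < 1 - x := by linarith
  have hQ := Qf19_pos hx0 hx1
  have hlp : HasDerivAt (fun t : ℝ => Real.log (1+t)) ((1+x)⁻¹) x := by
    have h' : HasDerivAt (fun t : ℝ => 1 + t) 1 x := (hasDerivAt_id x).const_add 1
    simpa using h'.log h1x.ne'
  have hlm : HasDerivAt (fun t : ℝ => Real.log (1-t)) (-(1-x)⁻¹) x := by
    have h' : HasDerivAt (fun t : ℝ => 1 - t) (-1) x := (hasDerivAt_id x).const_sub 1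
    have := h'.log h1x'.ne'
    convert this using 1
    field_simp
  have ha : HasDerivAt (fun t : ℝ => (1+t)*Real.log (1+t))
      (1*Real.log (1+x) + (1+x)*(1+x)⁻¹) x :=
    (((hasDerivAt_id x).const_add 1)).mul hlp
  have hb : HasDerivAt (fun t : ℝ => (1-t)*Real.log (1-t))
      ((-1)*Real.log (1-x) + (1-x)*(-(1-x)⁻¹)) x :=
    (((hasDerivAt_id x).const_sub 1)).mul hlm
  have hP : HasDerivAt Pf19 (Real.log (1+x) + Real.log (1-x) + 2) x := by
    have := ha.sub hb
    convert this using 1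
    · rfl
    · rfl
    · rfl
    field_simp
    ring
  have hQd : HasDerivAt Qf19 (Real.log (1+x) - Real.log (1-x)) x := by
    have := ha.add hb
    convert this using 1
    · rfl
    · rfl
    · rfl
    field_simp
    ring
  have h2x : HasDerivAt (fun t : ℝ => 2*t) 2 x := by
    simpa using (hasDerivAt_id x).const_mul (2:ℝ)
  have hdiv : HasDerivAt (fun t : ℝ => Pf19 t/(2*t))
      (((Real.log (1+x) + Real.log (1-x) + 2)*(2*x) - Pf19 x*2)/(2*x)^2) x :=
    hP.div h2x (by positivity)
  have hlogQ : HasDerivAt (fun t : ℝ => Real.log (Qf19 t))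
      ((Real.log (1+x) - Real.log (1-x))/Qf19 x) x := hQd.log hQ.ne'
  have hlogt : HasDerivAt (fun t : ℝ => 2*Real.log t) (2*x⁻¹) x :=
    (Real.hasDerivAt_log hx0.ne').const_mul 2
  exact ((hdiv.sub_const 1).add hlogQ).sub hlogt

private lemma deriv_gf19_nonneg {x : ℝ} (hx0 : 0 < x) (hx1 : x < 1) :
    0 ≤ ((Real.log (1+x) + Real.log (1-x) + 2)*(2*x) - Pf19 x*2)/(2*x)^2
        + (Real.log (1+x) - Real.log (1-x))/Qf19 x - 2*x⁻¹ := by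
  have hQ := Qf19_pos hx0 hx1
  have hG := Gkey19 hx0 hx1
  have hQ' : (1+x)*Real.log (1+x) + (1-x)*Real.log (1-x) ≠ 0 := by
    have h2 := Qf19_pos hx0 hx1
    unfold Qf19 at h2
    exact h2.ne'
  have e : ((Real.log (1+x) + Real.log (1-x) + 2)*(2*x) - Pf19 x*2)/(2*x)^2
        + (Real.log (1+x) - Real.log (1-x))/Qf19 x - 2*x⁻¹
      = (2*x*((-Real.log (1-x)) - Real.log (1+x)) + (1-x)*(-Real.log (1-x))^2
        - (1+x)*(Real.log (1+x))^2 - 2*x*(Real.log (1+x))*(-Real.log (1-x)))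
        / (2*x^2*Qf19 x) := by
    have h2 := Qf19_pos hx0 hx1
    unfold Qf19 at h2
    have h3 : (0:ℝ) < 2*x^2*((1+x)*Real.log (1+x) + (1-x)*Real.log (1-x)) := by positivity
    unfold Pf19 Qf19
    rw [eq_div_iff h3.ne']
    field_simp
    ring
  rw [e]
  exact div_nonneg hG (by positivity)

private lemma gf19_mono : MonotoneOn gf19 (Ioo (0:ℝ) 1) := by
  apply monotoneOn_of_deriv_nonneg (convex_Ioo _ _)
  · exact fun x hx => ((hasDerivAt_gf19 hx.1 hx.2).continuousAt).continuousWithinAt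
  · intro x hx
    rw [interior_Ioo] at hx
    exact ((hasDerivAt_gf19 hx.1 hx.2).differentiableAt).differentiableWithinAt
  · intro x hx
    rw [interior_Ioo] at hx
    rw [(hasDerivAt_gf19 hx.1 hx.2).deriv]
    exact deriv_gf19_nonneg hx.1 hx.2

private lemma mem01_19 : Ioo (0:ℝ) 1 ∈ 𝓝[>] (0:ℝ) :=
  Ioo_mem_nhdsGT_of_mem ⟨le_refl 0, zero_lt_one⟩

private lemma tendsto_log1p19 : Tendsto (fun t : ℝ => Real.log (1+t)/t) (𝓝[>] 0) (𝓝 1) := by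
  have hd : HasDerivAt (fun t : ℝ => Real.log (1+t)) 1 0 := by
    have h' : HasDerivAt (fun t : ℝ => 1 + t) 1 (0:ℝ) := (hasDerivAt_id 0).const_add 1
    simpa using h'.log (by norm_num)
  have := (hasDerivAt_iff_tendsto_slope.mp hd).mono_left
    (nhdsWithin_mono _ (fun y hy => ne_of_gt hy : Ioi (0:ℝ) ⊆ {(0:ℝ)}ᶜ))
  apply this.congr'
  filter_upwards [self_mem_nhdsWithin] with s hs
  simp [slope_def_field]

private lemma tendsto_log1m19 : Tendsto (fun t : ℝ => Real.log (1-t)/t) (𝓝[>] 0) (𝓝 (-1)) := by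
  have hd : HasDerivAt (fun t : ℝ => Real.log (1-t)) (-1) 0 := by
    have h' : HasDerivAt (fun t : ℝ => 1 - t) (-1) (0:ℝ) := (hasDerivAt_id 0).const_sub 1
    have := h'.log (by norm_num)
    convert this using 1
    norm_num
  have := (hasDerivAt_iff_tendsto_slope.mp hd).mono_left
    (nhdsWithin_mono _ (fun y hy => ne_of_gt hy : Ioi (0:ℝ) ⊆ {(0:ℝ)}ᶜ))
  apply this.congr'
  filter_upwards [self_mem_nhdsWithin] with s hs
  simp [slope_def_field]

private lemma tendsto_sq19 : Tendsto (fun t : ℝ => t^2) (𝓝[>] 0) (𝓝[>] 0) := by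
  rw [tendsto_nhdsWithin_iff]
  constructor
  · have h : Tendsto (fun t : ℝ => t^2) (𝓝 0) (𝓝 0) := by
      have := (continuous_pow 2).tendsto (0:ℝ)
      simpa using this
    exact h.mono_left nhdsWithin_le_nhds
  · filter_upwards [self_mem_nhdsWithin] with s hs
    exact pow_pos (show (0:ℝ) < s from hs) 2

private lemma tendsto_gf19_zero : Tendsto gf19 (𝓝[>] 0) (𝓝 0) := by
  have hA : Tendsto (fun t : ℝ => Pf19 t/(2*t)) (𝓝[>] 0) (𝓝 1) := by
    have hc1 : Tendsto (fun t : ℝ => 1+t) (𝓝[>] 0) (𝓝 1) := by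
      have h : Tendsto (fun t : ℝ => 1+t) (𝓝 0) (𝓝 1) := by
        have hcont : Continuous (fun t : ℝ => 1+t) := by fun_prop
        simpa using hcont.tendsto 0
      exact h.mono_left nhdsWithin_le_nhds
    have hc2 : Tendsto (fun t : ℝ => 1-t) (𝓝[>] 0) (𝓝 1) := by
      have h : Tendsto (fun t : ℝ => 1-t) (𝓝 0) (𝓝 1) := by
        have hcont : Continuous (fun t : ℝ => 1-t) := by fun_prop
        simpa using hcont.tendsto 0
      exact h.mono_left nhdsWithin_le_nhds
    have h1 := ((hc1.mul tendsto_log1p19).sub (hc2.mul tendsto_log1m19)).div_const 2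
    norm_num at h1
    apply h1.congr'
    filter_upwards [self_mem_nhdsWithin] with s hs
    have hs0 : s ≠ 0 := ne_of_gt hs
    unfold Pf19
    field_simp [hs0]
  have hB : Tendsto (fun t : ℝ => Qf19 t/t^2) (𝓝[>] 0) (𝓝 1) := by
    have hlog2 : Tendsto (fun t : ℝ => Real.log (1-t^2)/t^2) (𝓝[>] 0) (𝓝 (-1)) :=
      tendsto_log1m19.comp tendsto_sq19
    have h2 := hlog2.add (tendsto_log1p19.sub tendsto_log1m19)
    norm_num at h2
    apply h2.congr'
    filter_upwards [mem01_19] with s hs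
    have hs0 : s ≠ 0 := ne_of_gt hs.1
    have hsp : (0:ℝ) < 1+s := by linarith [hs.1]
    have hsm : (0:ℝ) < 1-s := by linarith [hs.2]
    unfold Qf19
    have e1 : (1:ℝ)-s^2 = (1+s)*(1-s) := by ring
    rw [e1, Real.log_mul hsp.ne' hsm.ne']
    field_simp
    ring
  have hC : Tendsto (fun t : ℝ => Real.log (Qf19 t/t^2)) (𝓝[>] 0) (𝓝 0) := by
    have := (Real.continuousAt_log one_ne_zero).tendsto.comp hB
    simpa [Function.comp_def] using this
  have h := (hA.sub_const 1).add hC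
  norm_num at h
  apply h.congr'
  filter_upwards [mem01_19] with s hs
  have hs0 : s ≠ 0 := ne_of_gt hs.1
  have hQ := Qf19_pos hs.1 hs.2
  unfold gf19
  rw [Real.log_div hQ.ne' (pow_ne_zero 2 hs0), Real.log_pow]
  push_cast
  ring

private lemma tendsto_sub19 : Tendsto (fun t : ℝ => 1-t) (𝓝[<] (1:ℝ)) (𝓝[>] 0) := by
  rw [tendsto_nhdsWithin_iff]
  constructor
  · have h : Tendsto (fun t : ℝ => 1-t) (𝓝 1) (𝓝 0) := by
      have hcont : Continuous (fun t : ℝ => 1-t) := by fun_prop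
      simpa using hcont.tendsto 1
    exact h.mono_left nhdsWithin_le_nhds
  · filter_upwards [self_mem_nhdsWithin] with s hs
    simpa using hs

private lemma tendsto_gf19_one :
    Tendsto gf19 (𝓝[<] (1:ℝ)) (𝓝 (Real.log 2 - 1 + Real.log (2*Real.log 2))) := by
  have hml : Tendsto (fun t : ℝ => (1-t)*Real.log (1-t)) (𝓝[<] (1:ℝ)) (𝓝 0) := by
    have h0 : Tendsto (fun u : ℝ => Real.log u * u) (𝓝[>] 0) (𝓝 0) := by
      have := tendsto_log_mul_rpow_nhdsGT_zero zero_lt_one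
      apply this.congr'
      filter_upwards [self_mem_nhdsWithin] with s hs
      rw [Real.rpow_one]
    have := h0.comp tendsto_sub19
    apply this.congr'
    filter_upwards [self_mem_nhdsWithin] with s _
    simp [mul_comm]
  have hp : Tendsto (fun t : ℝ => (1+t)*Real.log (1+t)) (𝓝[<] (1:ℝ)) (𝓝 (2*Real.log 2)) := by
    have hc : ContinuousAt (fun t : ℝ => (1+t)*Real.log (1+t)) 1 := by
      apply ContinuousAt.mul
      · fun_prop
      · exact (Real.continuousAt_log (by norm_num)).comp (by fun_prop)
    have h2 : Tendsto (fun t : ℝ => (1+t)*Real.log (1+t)) (𝓝 1) (𝓝 ((1+1)*Real.log (1+1))) :=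
      hc.tendsto
    have h3 := h2.mono_left (nhdsWithin_le_nhds (s := Iio (1:ℝ)))
    norm_num at h3
    exact h3
  have hPf : Tendsto Pf19 (𝓝[<] (1:ℝ)) (𝓝 (2*Real.log 2)) := by
    have := hp.sub hml
    norm_num at this
    exact this
  have hQf : Tendsto Qf19 (𝓝[<] (1:ℝ)) (𝓝 (2*Real.log 2)) := by
    have := hp.add hml
    norm_num at this
    exact this
  have h2t : Tendsto (fun t : ℝ => 2*t) (𝓝[<] (1:ℝ)) (𝓝 2) := by
    have h : Tendsto (fun t : ℝ => 2*t) (𝓝 1) (𝓝 2) := by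
      have hcont : Continuous (fun t : ℝ => 2*t) := by fun_prop
      simpa using hcont.tendsto 1
    exact h.mono_left nhdsWithin_le_nhds
  have hA : Tendsto (fun t : ℝ => Pf19 t/(2*t)) (𝓝[<] (1:ℝ)) (𝓝 (Real.log 2)) := by
    have := hPf.div h2t (by norm_num)
    convert this using 2
    · rfl
    · field_simp
  have hl2 : (0:ℝ) < Real.log 2 := Real.log_pos (by norm_num)
  have hB : Tendsto (fun t : ℝ => Real.log (Qf19 t)) (𝓝[<] (1:ℝ)) (𝓝 (Real.log (2*Real.log 2))) :=
    ((Real.continuousAt_log (by positivity)).tendsto).comp hQf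
  have hC : Tendsto (fun t : ℝ => 2*Real.log t) (𝓝[<] (1:ℝ)) (𝓝 0) := by
    have h : Tendsto (fun t : ℝ => 2*Real.log t) (𝓝 1) (𝓝 0) := by
      have := ((Real.continuousAt_log one_ne_zero).tendsto).const_smul (2:ℝ)
      norm_num at this
      simpa using this
    exact h.mono_left nhdsWithin_le_nhds
  have h := ((hA.sub_const 1).add hB).sub hC
  norm_num at h
  exact h

private lemma gf19_bounds {t : ℝ} (ht0 : 0 < t) (ht1 : t < 1) :
    0 ≤ gf19 t ∧ gf19 t ≤ Real.log 2 - 1 + Real.log (2*Real.log 2) := by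
  constructor
  · apply le_of_tendsto tendsto_gf19_zero
    filter_upwards [Ioo_mem_nhdsGT_of_mem ⟨le_refl 0, ht0⟩] with s hs
    exact gf19_mono ⟨hs.1, hs.2.trans ht1⟩ ⟨ht0, ht1⟩ hs.2.le
  · apply ge_of_tendsto tendsto_gf19_one
    filter_upwards [Ioo_mem_nhdsLT_of_mem ⟨ht1, le_refl 1⟩] with s hs
    exact gf19_mono ⟨ht0, ht1⟩ ⟨ht0.trans hs.1, hs.2⟩ hs.1.le

private lemma hXrep19 {a b : ℝ} (ha : 0 < a) (hb : 0 < b) :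
    (b ^ b / a ^ a) ^ (1/(b-a)) = Real.exp ((b*Real.log b - a*Real.log a) * (1/(b-a))) := by
  have hbb : (0:ℝ) < b ^ b := Real.rpow_pos_of_pos hb b
  have haa : (0:ℝ) < a ^ a := Real.rpow_pos_of_pos ha a
  rw [Real.rpow_def_of_pos (div_pos hbb haa), Real.log_div hbb.ne' haa.ne',
    Real.log_rpow hb, Real.log_rpow ha]

private lemma main19 {a b : ℝ} (ha : 0 < a) (hb : 0 < b) (hab : a < b) :
    1 ≤ ((1 / Real.exp 1) * (b ^ b / a ^ a) ^ (1 / (b - a))) /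
        ((b - a) ^ 2 /
          (4 * (a * Real.log a + b * Real.log b - (a + b) * Real.log ((a + b) / 2)))) ∧
    ((1 / Real.exp 1) * (b ^ b / a ^ a) ^ (1 / (b - a))) /
        ((b - a) ^ 2 /
          (4 * (a * Real.log a + b * Real.log b - (a + b) * Real.log ((a + b) / 2)))) ≤
      4 * Real.log 2 / Real.exp 1 := by
  set c : ℝ := (a+b)/2 with hc_def
  set t : ℝ := (b-a)/(a+b) with ht_def
  have hc : 0 < c := by rw [hc_def]; linarith
  have ht0 : 0 < t := by
    rw [ht_def]
    apply div_pos (by linarith) (by linarith)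
  have ht1 : t < 1 := by
    rw [ht_def, div_lt_one (by linarith : (0:ℝ) < a+b)]
    linarith
  have h1mt : (0:ℝ) < 1 - t := by linarith
  have h1pt : (0:ℝ) < 1 + t := by linarith
  have hA : a = c*(1-t) := by
    rw [hc_def, ht_def]
    field_simp
    ring
  have hB : b = c*(1+t) := by
    rw [hc_def, ht_def]
    field_simp
    ring
  have hba : b - a = 2*c*t := by
    rw [hc_def, ht_def]
    field_simp
  have hla : Real.log a = Real.log c + Real.log (1-t) := by
    rw [hA, Real.log_mul hc.ne' h1mt.ne']
  have hlb : Real.log b = Real.log c + Real.log (1+t) := by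
    rw [hB, Real.log_mul hc.ne' h1pt.ne']
  have hblb : b*Real.log b - a*Real.log a = c*(2*t*Real.log c + Pf19 t) := by
    rw [hla, hlb, hA, hB]
    unfold Pf19
    ring
  have hD : a * Real.log a + b * Real.log b - (a + b) * Real.log ((a + b) / 2)
      = c * Qf19 t := by
    rw [hla, hlb, hA, hB, show (c*(1-t)+c*(1+t))/2 = c from by ring]
    unfold Qf19
    ring
  have hQpos := Qf19_pos ht0 ht1
  have hexp_g : Real.exp (gf19 t) = Real.exp (Pf19 t/(2*t)) * Qf19 t / (Real.exp 1 * t^2) := by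
    unfold gf19
    rw [show Pf19 t/(2*t) - 1 + Real.log (Qf19 t) - 2*Real.log t
        = Pf19 t/(2*t) + Real.log (Qf19 t) - (1 + 2*Real.log t) by ring]
    rw [Real.exp_sub, Real.exp_add, Real.exp_add, Real.exp_log hQpos]
    rw [show (2:ℝ)*Real.log t = Real.log (t^2) by
      rw [Real.log_pow]; push_cast; ring]
    rw [Real.exp_log (pow_pos ht0 2)]
  have hX : (b ^ b / a ^ a) ^ (1/(b-a)) = c * Real.exp (Pf19 t/(2*t)) := by
    rw [hXrep19 ha hb, hblb, hba]
    rw [show c*(2*t*Real.log c + Pf19 t) * (1/(2*c*t)) = Real.log c + Pf19 t/(2*t) by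
      field_simp]
    rw [Real.exp_add, Real.exp_log hc]
  have hmain : ((1 / Real.exp 1) * (b ^ b / a ^ a) ^ (1 / (b - a))) /
        ((b - a) ^ 2 /
          (4 * (a * Real.log a + b * Real.log b - (a + b) * Real.log ((a + b) / 2))))
      = Real.exp (gf19 t) := by
    rw [hX, hba, hD, hexp_g]
    have he : Real.exp 1 ≠ 0 := (Real.exp_pos 1).ne'
    field_simp
    ring
  rw [hmain]
  obtain ⟨hg0, hgC⟩ := gf19_bounds ht0 ht1
  constructor
  · rw [show (1:ℝ) = Real.exp 0 from (Real.exp_zero).symm]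
    exact Real.exp_le_exp.mpr hg0
  · have hl2 : (0:ℝ) < Real.log 2 := Real.log_pos (by norm_num)
    have hCe : Real.exp (Real.log 2 - 1 + Real.log (2*Real.log 2)) = 4*Real.log 2/Real.exp 1 := by
      rw [Real.exp_add, Real.exp_sub, Real.exp_log (by norm_num : (0:ℝ) < 2),
        Real.exp_log (by positivity : (0:ℝ) < 2*Real.log 2)]
      field_simp
      ring
    calc Real.exp (gf19 t) ≤ Real.exp (Real.log 2 - 1 + Real.log (2*Real.log 2)) :=
          Real.exp_le_exp.mpr hgC
    _ = 4*Real.log 2/Real.exp 1 := hCe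

theorem stmt19 (a b : ℝ) (ha : 0 < a) (hb : 0 < b) (hab : a ≠ b) :
    1 ≤ ((1 / Real.exp 1) * (b ^ b / a ^ a) ^ (1 / (b - a))) /
        ((b - a) ^ 2 /
          (4 * (a * Real.log a + b * Real.log b - (a + b) * Real.log ((a + b) / 2)))) ∧
    ((1 / Real.exp 1) * (b ^ b / a ^ a) ^ (1 / (b - a))) /
        ((b - a) ^ 2 /
          (4 * (a * Real.log a + b * Real.log b - (a + b) * Real.log ((a + b) / 2)))) ≤
      4 * Real.log 2 / Real.exp 1 := by
  rcases lt_or_gt_of_ne hab with h | h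
  · exact main19 ha hb h
  · have key := main19 hb ha h
    have hsym : ((1 / Real.exp 1) * (b ^ b / a ^ a) ^ (1 / (b - a))) /
        ((b - a) ^ 2 /
          (4 * (a * Real.log a + b * Real.log b - (a + b) * Real.log ((a + b) / 2))))
        = ((1 / Real.exp 1) * (a ^ a / b ^ b) ^ (1 / (a - b))) /
        ((a - b) ^ 2 /
          (4 * (b * Real.log b + a * Real.log a - (b + a) * Real.log ((b + a) / 2)))) := by
      rw [hXrep19 ha hb, hXrep19 hb ha]
      have hne : b - a ≠ 0 := sub_ne_zero.mpr (ne_of_lt h)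
      have hne' : a - b ≠ 0 := sub_ne_zero.mpr (ne_of_gt h)
      rw [show (b*Real.log b - a*Real.log a) * (1/(b-a))
          = (a*Real.log a - b*Real.log b) * (1/(a-b)) by
        field_simp
        ring]
      rw [show (b-a)^2 = (a-b)^2 by ring, show (a+b) = (b+a) by ring]
      ring_nf
    rw [hsym]
    exact key

end
end
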